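/- Let 𝒳 and 𝒜 be finite nonempty sets, let n, h ≥ 1 be integers, and let (x_{t,i}, a_{t,i}) ∈ 𝒳×𝒜 for t = 1,…,n and i = 1,…,h be an arbitrary doubly indexed sequence of state-action pairs. For each pair (x,a) let N_t(x,a) = Σ_{ℓ=1}^{t−1} Σ_{i=1}^{h} 1{x_{ℓ,i} = x, a_{ℓ,i} = a}. Then for every Λ > 0, Σ_{t=1}^{n} Σ_{i=1}^{h} 1{N_t(x_{t,i}, a_{t,i}) > h} · √( 2 log(2|𝒳||𝒜|n) / (Λ + N_t(x_{t,i}, a_{t,i}) + 1) ) ≤ 2 √( |𝒳||𝒜| n h · log(2|𝒳||𝒜|n) · log(1 + n h / (2|𝒳||𝒜|Λ)) ). -/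

import Mathlib

open Finset

lemma harm_le_log (c : ℝ) (hc : 0 < c) (T : ℕ) :
    ∑ j ∈ range T, (c + j + 1)⁻¹ ≤ Real.log (1 + T / c) := by
  have key : ∀ j : ℕ, (c + j + 1)⁻¹ ≤ Real.log (c + ((j+1 : ℕ) : ℝ)) - Real.log (c + j) := by
    intro j
    have h1 : (0:ℝ) < c + j := by positivity
    have h2 : (0:ℝ) < c + j + 1 := by positivity
    have hlog := Real.log_le_sub_one_of_pos (show (0:ℝ) < (c+j)/(c+j+1) by positivity)
    rw [Real.log_div (ne_of_gt h1) (ne_of_gt h2)] at hlog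
    have harith : (c+(j:ℝ))/(c+j+1) - 1 = -(c+(j:ℝ)+1)⁻¹ := by field_simp; ring
    rw [harith] at hlog
    rw [show c + (((j+1:ℕ)):ℝ) = c + (j:ℝ) + 1 by push_cast; ring]
    linarith
  calc ∑ j ∈ range T, (c + j + 1)⁻¹
      ≤ ∑ j ∈ range T, (Real.log (c + ((j+1:ℕ):ℝ)) - Real.log (c + j)) :=
        Finset.sum_le_sum fun j _ => key j
    _ = Real.log (c + T) - Real.log (c + ((0:ℕ):ℝ)) :=
        Finset.sum_range_sub (fun j : ℕ => Real.log (c + j)) T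
    _ ≤ Real.log (1 + T / c) := by
        rw [show c + ((0:ℕ):ℝ) = c by simp,
          ← Real.log_div (by positivity) (ne_of_gt hc)]
        apply le_of_eq
        congr 1
        field_simp

lemma tile_sum (g : ℕ → ℝ) (M : ℕ → ℕ) (hM : ∀ t, M t ≤ M (t+1)) (h1 : M 1 = 0) (n : ℕ) :
    ∑ t ∈ Icc 1 n, ∑ j ∈ Ico (M t) (M (t+1)), g j = ∑ j ∈ range (M (n+1)), g j := by
  induction n with
  | zero => simp [h1]
  | succ k ih =>
      rw [Finset.sum_Icc_succ_top (by omega : 1 ≤ k+1), ih, range_eq_Ico]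
      rw [range_eq_Ico]; exact Finset.sum_Ico_consecutive g (Nat.zero_le _) (hM (k+1))

lemma fiber_expand {M α β : Type*} [AddCommMonoid M] [Fintype α] [Fintype β]
    [DecidableEq α] [DecidableEq β]
    (c : α) (d : β) (F : α → β → M) :
    F c d = ∑ p : α, ∑ q : β, if c = p ∧ d = q then F p q else 0 := by
  have hq : ∀ p : α, (∑ q : β, if c = p ∧ d = q then F p q else 0)
      = if c = p then F p d else 0 := by
    intro p
    by_cases hc : c = p
    · subst hc
      simp [Finset.sum_ite_eq]
    · simp [hc]
  simp [hq, Finset.sum_ite_eq]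

lemma jensen_log {ι : Type*} [Fintype ι] [Nonempty ι] (y : ι → ℝ) (hy : ∀ i, 0 < y i) :
    ∑ i, Real.log (y i) ≤ (Fintype.card ι) * Real.log ((∑ i, y i) / Fintype.card ι) := by
  have hK : (0:ℝ) < Fintype.card ι := by exact_mod_cast Fintype.card_pos
  have key := strictConcaveOn_log_Ioi.concaveOn.le_map_sum
    (t := (univ : Finset ι)) (w := fun _ => ((Fintype.card ι : ℝ))⁻¹) (p := y)
    (fun i _ => by positivity)
    (by rw [Finset.sum_const, Finset.card_univ, nsmul_eq_mul, mul_inv_cancel₀ (ne_of_gt hK)])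
    (fun i _ => hy i)
  simp only [smul_eq_mul] at key
  calc ∑ i, Real.log (y i)
      = (Fintype.card ι) * ∑ i, ((Fintype.card ι:ℝ))⁻¹ * Real.log (y i) := by
        rw [← Finset.mul_sum, ← mul_assoc, mul_inv_cancel₀ (ne_of_gt hK), one_mul]
    _ ≤ (Fintype.card ι) * Real.log (∑ i, ((Fintype.card ι:ℝ))⁻¹ * y i) :=
        mul_le_mul_of_nonneg_left key hK.le
    _ = (Fintype.card ι) * Real.log ((∑ i, y i) / Fintype.card ι) := by
        rw [← Finset.mul_sum, inv_mul_eq_div]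

/-- Let `𝒳, 𝒜` be finite nonempty sets, `n, h ≥ 1`, and `(x_{t,i}, a_{t,i})` an arbitrary
doubly indexed sequence of state-action pairs, with visit counts
`N_t(x,a) = Σ_{ℓ=1}^{t−1} Σ_{i=1}^{h} 1{x_{ℓ,i} = x, a_{ℓ,i} = a}`. Then for every `Λ > 0`,
`Σ_{t=1}^n Σ_{i=1}^h 1{N_t(x_{t,i},a_{t,i}) > h} √(2 log(2|𝒳||𝒜|n)/(Λ + N_t + 1))
  ≤ 2 √(|𝒳||𝒜| n h log(2|𝒳||𝒜|n) log(1 + n h/(2|𝒳||𝒜|Λ)))`. -/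
theorem sum_indicator_sqrt_count_le {𝒳 𝒜 : Type*} [Fintype 𝒳] [Fintype 𝒜]
    [DecidableEq 𝒳] [DecidableEq 𝒜] [Nonempty 𝒳] [Nonempty 𝒜]
    {n h : ℕ} (hn : 1 ≤ n) (hh : 1 ≤ h)
    (x : ℕ → ℕ → 𝒳) (a : ℕ → ℕ → 𝒜)
    (N : ℕ → 𝒳 → 𝒜 → ℕ)
    (hN : ∀ t p q, N t p q =
      ∑ l ∈ Finset.Ico 1 t, ∑ i ∈ Finset.Icc 1 h,
        if x l i = p ∧ a l i = q then 1 else 0)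
    (Λ : ℝ) (hΛ : 0 < Λ) :
    ∑ t ∈ Finset.Icc 1 n, ∑ i ∈ Finset.Icc 1 h,
        (if h < N t (x t i) (a t i) then (1 : ℝ) else 0) *
          Real.sqrt (2 * Real.log (2 * Fintype.card 𝒳 * Fintype.card 𝒜 * n) /
            (Λ + N t (x t i) (a t i) + 1)) ≤
      2 * Real.sqrt ((Fintype.card 𝒳 : ℝ) * Fintype.card 𝒜 * n * h *
        Real.log (2 * Fintype.card 𝒳 * Fintype.card 𝒜 * n) *
        Real.log (1 + n * h / (2 * Fintype.card 𝒳 * Fintype.card 𝒜 * Λ))) := by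
  classical
  set Kx := Fintype.card 𝒳 with hKxdef
  set Ka := Fintype.card 𝒜 with hKadef
  have hKx1 : 1 ≤ Kx := Fintype.card_pos
  have hKa1 : 1 ≤ Ka := Fintype.card_pos
  have hKxR : (1:ℝ) ≤ Kx := by exact_mod_cast hKx1
  have hKaR : (1:ℝ) ≤ Ka := by exact_mod_cast hKa1
  have hnR : (1:ℝ) ≤ n := by exact_mod_cast hn
  have hhR : (1:ℝ) ≤ h := by exact_mod_cast hh
  set L := Real.log (2 * (Kx:ℝ) * Ka * n) with hLdef
  have hKK : (1:ℝ) ≤ (Kx:ℝ) * Ka := by nlinarith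
  have hKKn : (1:ℝ) ≤ (Kx:ℝ) * Ka * n := by nlinarith
  have hL0 : 0 ≤ L := Real.log_nonneg (by nlinarith)
  set LG := Real.log (1 + (n:ℝ) * h / (2 * Kx * Ka * Λ)) with hLGdef
  have hLG0 : 0 ≤ LG := Real.log_nonneg (le_add_of_nonneg_right (by positivity))
  set C := ∑ t ∈ Finset.Icc 1 n, ∑ i ∈ Finset.Icc 1 h,
      (if h < N t (x t i) (a t i) then (1:ℝ) else 0) / (Λ + N t (x t i) (a t i) + 1) with hCdef
  -- basic facts about N
  set m : 𝒳 → 𝒜 → ℕ → ℕ := fun p q t => ∑ i ∈ Icc 1 h, if x t i = p ∧ a t i = q then 1 else 0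
    with hmdef
  have hNm : ∀ t p q, N t p q = ∑ l ∈ Ico 1 t, m p q l := fun t p q => hN t p q
  have hmle : ∀ p q t, m p q t ≤ h := by
    intro p q t
    calc m p q t = ∑ i ∈ Icc 1 h, if x t i = p ∧ a t i = q then 1 else 0 := rfl
      _ ≤ ∑ i ∈ Icc 1 h, 1 := Finset.sum_le_sum (fun i _ => by split <;> omega)
      _ = h := by simp
  have hNsucc : ∀ p q t, 1 ≤ t → N (t+1) p q = N t p q + m p q t := by
    intro p q t ht
    rw [hNm, hNm, Finset.sum_Ico_succ_top ht]
  have hNmono : ∀ p q t, N t p q ≤ N (t+1) p q := by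
    intro p q t
    rw [hNm, hNm]
    exact Finset.sum_le_sum_of_subset (Finset.Ico_subset_Ico le_rfl (by omega))
  have hN1 : ∀ p q, N 1 p q = 0 := by intro p q; rw [hNm]; simp
  -- total count
  have hTsum : ∑ pq : 𝒳 × 𝒜, N (n+1) pq.1 pq.2 = n * h := by
    simp_rw [hN]
    rw [Finset.sum_comm]
    have hl : ∀ l, (∑ pq : 𝒳 × 𝒜, ∑ i ∈ Icc 1 h,
        if x l i = pq.1 ∧ a l i = pq.2 then 1 else 0) = h := by
      intro l
      rw [Finset.sum_comm]
      have h1 : ∀ i, (∑ pq : 𝒳 × 𝒜, if x l i = pq.1 ∧ a l i = pq.2 then 1 else 0) = 1 := by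
        intro i
        rw [Fintype.sum_prod_type]
        exact (fiber_expand (x l i) (a l i) (fun _ _ => (1:ℕ))).symm
      simp [h1]
    rw [Finset.sum_congr rfl (fun l _ => hl l)]
    simp [Nat.card_Ico, mul_comm]
  -- core bound
  have hCore : C ≤ 2 * ((Kx:ℝ) * Ka) * LG := by
    have hregroup : C = ∑ p : 𝒳, ∑ q : 𝒜, ∑ t ∈ Icc 1 n,
        (m p q t : ℝ) * ((if h < N t p q then (1:ℝ) else 0) / (Λ + N t p q + 1)) := by
      rw [hCdef]
      have pert : ∀ t, ∑ i ∈ Icc 1 h,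
          (if h < N t (x t i) (a t i) then (1:ℝ) else 0) / (Λ + N t (x t i) (a t i) + 1)
          = ∑ p : 𝒳, ∑ q : 𝒜,
            (m p q t : ℝ) * ((if h < N t p q then (1:ℝ) else 0) / (Λ + N t p q + 1)) := by
        intro t
        have e1 : ∀ i, (if h < N t (x t i) (a t i) then (1:ℝ) else 0) / (Λ + N t (x t i) (a t i) + 1)
            = ∑ p : 𝒳, ∑ q : 𝒜, (if x t i = p ∧ a t i = q then
                (if h < N t p q then (1:ℝ) else 0) / (Λ + N t p q + 1) else 0) :=
          fun i => fiber_expand (x t i) (a t i)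
            (fun p q => (if h < N t p q then (1:ℝ) else 0) / (Λ + N t p q + 1))
        rw [Finset.sum_congr rfl (fun i _ => e1 i), Finset.sum_comm]
        apply Finset.sum_congr rfl; intro p _
        rw [Finset.sum_comm]
        apply Finset.sum_congr rfl; intro q _
        have e2 : ∀ i, (if x t i = p ∧ a t i = q then
              (if h < N t p q then (1:ℝ) else 0) / (Λ + N t p q + 1) else 0)
            = (if x t i = p ∧ a t i = q then (1:ℝ) else 0) *
              ((if h < N t p q then (1:ℝ) else 0) / (Λ + N t p q + 1)) := by
          intro i; split <;> simp
        rw [Finset.sum_congr rfl (fun i _ => e2 i), ← Finset.sum_mul]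
        congr 1
        show _ = ((m p q t : ℕ) : ℝ)
        rw [hmdef]
        push_cast
        rfl
      rw [Finset.sum_congr rfl (fun t _ => pert t), Finset.sum_comm]
      apply Finset.sum_congr rfl; intro p _
      rw [Finset.sum_comm]
    have hfiber : ∀ p q, ∑ t ∈ Icc 1 n,
        (m p q t : ℝ) * ((if h < N t p q then (1:ℝ) else 0) / (Λ + N t p q + 1))
        ≤ 2 * Real.log (1 + (N (n+1) p q : ℝ) / (2*Λ)) := by
      intro p q
      have hstep : ∀ t ∈ Icc 1 n,
          (m p q t : ℝ) * ((if h < N t p q then (1:ℝ) else 0) / (Λ + N t p q + 1))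
          ≤ ∑ j ∈ Ico (N t p q) (N (t+1) p q), 2 / (2*Λ + j + 1) := by
        intro t ht
        rw [Finset.mem_Icc] at ht
        by_cases hbig : h < N t p q
        · rw [if_pos hbig, hNsucc p q t ht.1]
          have hmh := hmle p q t
          have hcast1 : (h:ℝ) + 1 ≤ (N t p q : ℝ) := by exact_mod_cast hbig
          have hcast2 : (m p q t : ℝ) ≤ h := by exact_mod_cast hmh
          calc (m p q t : ℝ) * ((1:ℝ) / (Λ + N t p q + 1))
              = ∑ j ∈ Ico (N t p q) (N t p q + m p q t), (1:ℝ) / (Λ + N t p q + 1) := by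
                rw [Finset.sum_const, Nat.card_Ico, Nat.add_sub_cancel_left, nsmul_eq_mul]
            _ ≤ ∑ j ∈ Ico (N t p q) (N t p q + m p q t), 2 / (2*Λ + j + 1) := by
                apply Finset.sum_le_sum; intro j hj
                rw [Finset.mem_Ico] at hj
                have hj1 : (j:ℝ) + 1 ≤ (N t p q : ℝ) + m p q t := by exact_mod_cast hj.2
                rw [div_le_div_iff₀ (by positivity) (by positivity)]
                nlinarith
        · rw [if_neg hbig, zero_div, mul_zero]
          exact Finset.sum_nonneg fun j _ => by positivity
      calc ∑ t ∈ Icc 1 n,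
            (m p q t : ℝ) * ((if h < N t p q then (1:ℝ) else 0) / (Λ + N t p q + 1))
          ≤ ∑ t ∈ Icc 1 n, ∑ j ∈ Ico (N t p q) (N (t+1) p q), 2 / (2*Λ + j + 1) :=
            Finset.sum_le_sum hstep
        _ = ∑ j ∈ range (N (n+1) p q), 2 / (2*Λ + j + 1) :=
            tile_sum (fun j => 2 / (2*Λ + j + 1)) (fun t => N t p q)
              (fun t => hNmono p q t) (hN1 p q) n
        _ = 2 * ∑ j ∈ range (N (n+1) p q), (2*Λ + j + 1)⁻¹ := by
            rw [Finset.mul_sum]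
            exact Finset.sum_congr rfl fun j _ => by rw [div_eq_mul_inv]
        _ ≤ 2 * Real.log (1 + (N (n+1) p q : ℝ) / (2*Λ)) :=
            mul_le_mul_of_nonneg_left (harm_le_log (2*Λ) (by positivity) _) (by norm_num)
    have hjensen : ∑ p : 𝒳, ∑ q : 𝒜, 2 * Real.log (1 + (N (n+1) p q : ℝ) / (2*Λ))
        ≤ 2 * ((Kx:ℝ) * Ka) * LG := by
      rw [← Fintype.sum_prod_type']
      have hpos : ∀ pq : 𝒳 × 𝒜, 0 < 1 + (N (n+1) pq.1 pq.2 : ℝ) / (2*Λ) := fun pq => by positivity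
      have hj := jensen_log (ι := 𝒳 × 𝒜) (fun pq => 1 + (N (n+1) pq.1 pq.2 : ℝ) / (2*Λ)) hpos
      have hcard : (Fintype.card (𝒳 × 𝒜) : ℝ) = (Kx:ℝ) * Ka := by
        rw [Fintype.card_prod]; push_cast; rfl
      have hsumN : ∑ pq : 𝒳 × 𝒜, (N (n+1) pq.1 pq.2 : ℝ) = (n:ℝ) * h := by
        exact_mod_cast congrArg (fun k : ℕ => (k:ℝ)) hTsum
      have hsumy : ∑ pq : 𝒳 × 𝒜, (1 + (N (n+1) pq.1 pq.2 : ℝ) / (2*Λ))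
          = (Kx:ℝ) * Ka + (n:ℝ) * h / (2*Λ) := by
        rw [Finset.sum_add_distrib, Finset.sum_const, Finset.card_univ, ← Finset.sum_div, hsumN,
          nsmul_eq_mul, mul_one, hcard]
      have hargeq : ((Kx:ℝ) * Ka + (n:ℝ) * h / (2*Λ)) / ((Kx:ℝ) * Ka)
          = 1 + (n:ℝ) * h / (2 * Kx * Ka * Λ) := by
        have hKKne : ((Kx:ℝ) * Ka) ≠ 0 := by positivity
        field_simp
      rw [hsumy] at hj
      rw [hcard, hargeq] at hj
      calc (∑ pq : 𝒳 × 𝒜, 2 * Real.log (1 + (N (n+1) pq.1 pq.2 : ℝ) / (2*Λ)))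
          = 2 * ∑ pq : 𝒳 × 𝒜, Real.log (1 + (N (n+1) pq.1 pq.2 : ℝ) / (2*Λ)) := by
            rw [Finset.mul_sum]
        _ ≤ 2 * ((Kx:ℝ) * Ka * LG) := by
            apply mul_le_mul_of_nonneg_left _ (by norm_num)
            exact hj
        _ = 2 * ((Kx:ℝ) * Ka) * LG := by ring
    rw [hregroup]
    refine le_trans (Finset.sum_le_sum fun p _ => Finset.sum_le_sum fun q _ => hfiber p q) hjensen
  -- nonnegativity of C
  have hC0 : (0:ℝ) ≤ C := by
    apply Finset.sum_nonneg; intro t _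
    apply Finset.sum_nonneg; intro i _
    apply div_nonneg _ (by positivity)
    split <;> norm_num
  -- Cauchy–Schwarz
  set S := ∑ t ∈ Finset.Icc 1 n, ∑ i ∈ Finset.Icc 1 h,
      (if h < N t (x t i) (a t i) then (1:ℝ) else 0) *
        Real.sqrt (2 * L / (Λ + N t (x t i) (a t i) + 1)) with hSdef
  have hS0 : 0 ≤ S := by
    apply Finset.sum_nonneg; intro t _
    apply Finset.sum_nonneg; intro i _
    apply mul_nonneg _ (Real.sqrt_nonneg _)
    split <;> norm_num
  have hsq : S ^ 2 ≤ ((n:ℝ) * h) * (2 * L * C) := by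
    have hrw : S = ∑ p ∈ Icc 1 n ×ˢ Icc 1 h,
        ((if h < N p.1 (x p.1 p.2) (a p.1 p.2) then (1:ℝ) else 0) *
          Real.sqrt (2 * L / (Λ + N p.1 (x p.1 p.2) (a p.1 p.2) + 1))) := by
      rw [Finset.sum_product]
    have hcs := sq_sum_le_card_mul_sum_sq
      (s := Icc 1 n ×ˢ Icc 1 h)
      (f := fun p => (if h < N p.1 (x p.1 p.2) (a p.1 p.2) then (1:ℝ) else 0) *
          Real.sqrt (2 * L / (Λ + N p.1 (x p.1 p.2) (a p.1 p.2) + 1)))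
    rw [← hrw] at hcs
    have hcard : ((Icc 1 n ×ˢ Icc 1 h).card : ℝ) = (n:ℝ) * h := by
      rw [Finset.card_product, Nat.card_Icc, Nat.card_Icc]
      push_cast
      ring_nf
    have hsumsq : ∑ p ∈ Icc 1 n ×ˢ Icc 1 h,
        ((if h < N p.1 (x p.1 p.2) (a p.1 p.2) then (1:ℝ) else 0) *
          Real.sqrt (2 * L / (Λ + N p.1 (x p.1 p.2) (a p.1 p.2) + 1))) ^ 2
        = 2 * L * C := by
      rw [hCdef, Finset.sum_product, Finset.mul_sum]
      apply Finset.sum_congr rfl; intro t _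
      rw [Finset.mul_sum]
      apply Finset.sum_congr rfl; intro i _
      rw [mul_pow, Real.sq_sqrt (by positivity : (0:ℝ) ≤ 2 * L / (Λ + N t (x t i) (a t i) + 1))]
      split <;> ring
    calc S ^ 2 ≤ ((Icc 1 n ×ˢ Icc 1 h).card : ℝ) * ∑ p ∈ Icc 1 n ×ˢ Icc 1 h,
          ((if h < N p.1 (x p.1 p.2) (a p.1 p.2) then (1:ℝ) else 0) *
            Real.sqrt (2 * L / (Λ + N p.1 (x p.1 p.2) (a p.1 p.2) + 1))) ^ 2 := hcs
      _ = ((n:ℝ) * h) * (2 * L * C) := by rw [hcard, hsumsq]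
  -- conclude
  have hfin : S ≤ 2 * Real.sqrt ((Kx:ℝ) * Ka * n * h * L * LG) := by
    have h2 : S ^ 2 ≤ ((n:ℝ) * h) * (2 * L * (2 * ((Kx:ℝ) * Ka) * LG)) := by
      refine le_trans hsq ?_
      apply mul_le_mul_of_nonneg_left _ (by positivity)
      exact mul_le_mul_of_nonneg_left hCore (by positivity)
    have heq : ((n:ℝ) * h) * (2 * L * (2 * ((Kx:ℝ) * Ka) * LG))
        = 4 * ((Kx:ℝ) * Ka * n * h * L * LG) := by ring
    calc S = Real.sqrt (S ^ 2) := (Real.sqrt_sq hS0).symm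
      _ ≤ Real.sqrt (4 * ((Kx:ℝ) * Ka * n * h * L * LG)) := by
          apply Real.sqrt_le_sqrt; rw [← heq]; exact h2
      _ = 2 * Real.sqrt ((Kx:ℝ) * Ka * n * h * L * LG) := by
          rw [show (4:ℝ) = 2^2 by norm_num, Real.sqrt_mul (by positivity),
            Real.sqrt_sq (by norm_num)]
  exact hfin
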